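/- arXiv:1205.3416 — 2 statements merged into one kernel-verified Lean document; each statement's English description precedes it below -/
import Mathlib

section
/- Let R be a finitely generated commutative graded F-algebra with R_0 = F. Then for every positive integer k, β_k(R) ≤ (k−1)·σ(R) + η(R), where η(R) := β(R_+, F[R_{≤σ(R)}]) is the top degree of R_+ modulo the submodule (F[R_{≤σ(R)}])_+·R_+. -/
open scoped ENNReal


/-- `R_+`, the span of the homogeneous elements of positive degree. -/
noncomputable def gradePos {F R : Type*} [Field F] [CommRing R] [Algebra F R]
    (𝒜 : ℕ → Submodule F R) : Submodule F R :=
  ⨆ d ∈ Set.Ioi (0 : ℕ), 𝒜 d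

/-- `β_k(R)`, the top degree of `R_+/R_+^{k+1}`:  the supremum (in `ℕ∞`) of the degrees `d`
such that the degree `d` component of `R_+` is not contained in `R_+^{k+1}`. -/
noncomputable def gBeta {F R : Type*} [Field F] [CommRing R] [Algebra F R]
    (𝒜 : ℕ → Submodule F R) (k : ℕ) : ℕ∞ :=
  sSup ((fun d : ℕ => (d : ℕ∞)) '' {d | 0 < d ∧ ¬ 𝒜 d ≤ gradePos 𝒜 ^ (k + 1)})

/-- `F[R_{≤ d}]`, the subalgebra of `R` generated by the homogeneous elements
of degree at most `d`. -/
noncomputable def gBelow {F R : Type*} [Field F] [CommRing R] [Algebra F R]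
    (𝒜 : ℕ → Submodule F R) (d : ℕ) : Subalgebra F R :=
  Algebra.adjoin F (⋃ i ∈ Set.Iic d, (𝒜 i : Set R))

/-- `σ(R)`, the minimal `d` such that `R` is a finitely generated module over `F[R_{≤ d}]`. -/
noncomputable def gSigma {F R : Type*} [Field F] [CommRing R] [Algebra F R]
    (𝒜 : ℕ → Submodule F R) : ℕ :=
  sInf {d : ℕ | Module.Finite (gBelow 𝒜 d) R}

/-- `η(R) = β(R_+, F[R_{≤ σ(R)}])`, the top degree of `R_+` modulo `(F[R_{≤ σ(R)}])_+ ⬝ R_+`. -/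
noncomputable def gEta {F R : Type*} [Field F] [CommRing R] [Algebra F R]
    (𝒜 : ℕ → Submodule F R) : ℕ∞ :=
  sSup ((fun d : ℕ => (d : ℕ∞)) '' {d | 0 < d ∧
    ¬ 𝒜 d ≤ (Subalgebra.toSubmodule (gBelow 𝒜 (gSigma 𝒜)) ⊓ gradePos 𝒜) * gradePos 𝒜})


section GBetaAux
set_option linter.unusedSectionVars false
open DirectSum
variable {F R : Type*} [Field F] [CommRing R] [Algebra F R]

/-- Degree-`i` projection as a linear map. -/
noncomputable def gProj (𝒜 : ℕ → Submodule F R) [GradedAlgebra 𝒜] (i : ℕ) : R →ₗ[F] R where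
  toFun x := DirectSum.decompose 𝒜 x i
  map_add' x y := by simp [DirectSum.decompose_add]
  map_smul' c x := by simp [DirectSum.decompose_smul, DirectSum.smul_apply]

@[simp] lemma gProj_apply (𝒜 : ℕ → Submodule F R) [GradedAlgebra 𝒜] (i : ℕ) (x : R) :
    gProj 𝒜 i x = (DirectSum.decompose 𝒜 x i : R) := rfl

variable (𝒜 : ℕ → Submodule F R) [GradedAlgebra 𝒜]

lemma grade_le_pos {d : ℕ} (hd : 0 < d) : 𝒜 d ≤ gradePos 𝒜 :=
  le_iSup₂ (f := fun d (_ : d ∈ Set.Ioi 0) => 𝒜 d) d hd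

lemma mem_pos_iff (x : R) : x ∈ gradePos 𝒜 ↔ (decompose 𝒜 x 0 : R) = 0 := by
  constructor
  · intro hx
    have hle : gradePos 𝒜 ≤ LinearMap.ker (gProj 𝒜 0) := by
      refine iSup₂_le fun d hd => fun y hy => ?_
      simpa using DirectSum.decompose_of_mem_ne 𝒜 hy (Set.mem_Ioi.mp hd).ne'
    simpa using hle hx
  · intro h
    classical
    rw [← DirectSum.sum_support_decompose 𝒜 x]
    refine Submodule.sum_mem _ fun i _ => ?_
    rcases Nat.eq_zero_or_pos i with h0 | hpos
    · subst h0; rw [h]; exact zero_mem _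
    · exact grade_le_pos 𝒜 hpos (SetLike.coe_mem _)

lemma pos_decompose {x : R} (hx : x ∈ gradePos 𝒜) (i : ℕ) :
    (decompose 𝒜 x i : R) ∈ gradePos 𝒜 := by
  rcases Nat.eq_zero_or_pos i with h0 | hpos
  · subst h0; rw [(mem_pos_iff 𝒜 x).mp hx]; exact zero_mem _
  · exact grade_le_pos 𝒜 hpos (SetLike.coe_mem _)

lemma pos_mul_mem {x y : R} (hx : x ∈ gradePos 𝒜) (hy : y ∈ gradePos 𝒜) :
    x * y ∈ gradePos 𝒜 := by
  rw [mem_pos_iff] at hx hy ⊢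
  have := map_mul (GradedRing.projZeroRingHom 𝒜) x y
  simp only [GradedRing.projZeroRingHom_apply] at this
  rw [this, hx, hy, mul_zero]

/-- `M = A_+ = F[R_{≤n}] ∩ R_+`. -/
noncomputable def gM (𝒜 : ℕ → Submodule F R) (n : ℕ) : Submodule F R :=
  Subalgebra.toSubmodule (gBelow 𝒜 n) ⊓ gradePos 𝒜

lemma gM_mul_le (n : ℕ) : gM 𝒜 n * gM 𝒜 n ≤ gM 𝒜 n := by
  refine Submodule.mul_le.mpr fun x hx y hy => ?_
  exact ⟨(gBelow 𝒜 n).mul_mem hx.1 hy.1, pos_mul_mem 𝒜 hx.2 hy.2⟩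

lemma gM_inf_zero : gM 𝒜 n ⊓ 𝒜 0 ≤ ⊥ := by
  rintro x ⟨⟨-, hxP⟩, hx0⟩
  have := (mem_pos_iff 𝒜 x).mp hxP
  rw [DirectSum.decompose_of_mem_same 𝒜 hx0] at this
  simpa using this

lemma monomial_lemma (h0 : 𝒜 0 = 1) (n : ℕ) :
    ∀ y ∈ Submonoid.closure (⋃ i ∈ Set.Iic n, (𝒜 i : Set R)),
      ∃ d, y ∈ 𝒜 d ∧ y ∈ gBelow 𝒜 n ∧
        (0 < d → y ∈ gM 𝒜 n) ∧
        (n < d → y ∈ (gM 𝒜 n * gM 𝒜 n : Submodule F R)) := by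
  intro y hy
  induction hy using Submonoid.closure_induction with
  | mem z hz =>
    obtain ⟨i, hi, hzi⟩ := Set.mem_iUnion₂.mp hz
    refine ⟨i, hzi, Algebra.subset_adjoin hz, fun hpos => ⟨Algebra.subset_adjoin hz,
      grade_le_pos 𝒜 hpos hzi⟩, fun hlt => absurd hi (by simpa using hlt.not_ge)⟩
  | one =>
    exact ⟨0, SetLike.GradedOne.one_mem, one_mem _, fun h => absurd h (lt_irrefl 0),
      fun h => absurd h (Nat.not_lt_zero n)⟩
  | mul x y hx hy ihx ihy =>
    obtain ⟨d₁, hx1, hxA, hxM, hxMM⟩ := ihx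
    obtain ⟨d₂, hy1, hyA, hyM, hyMM⟩ := ihy
    refine ⟨d₁ + d₂, SetLike.mul_mem_graded hx1 hy1, (gBelow 𝒜 n).mul_mem hxA hyA, ?_, ?_⟩
    · intro hpos
      rcases Nat.eq_zero_or_pos d₁ with h1 | h1
      · subst h1
        obtain ⟨c, hc⟩ := Submodule.mem_one.mp (h0 ▸ hx1)
        rw [← hc, ← Algebra.smul_def]
        exact Submodule.smul_mem _ c (hyM (by omega))
      · rcases Nat.eq_zero_or_pos d₂ with h2 | h2
        · subst h2
          obtain ⟨c, hc⟩ := Submodule.mem_one.mp (h0 ▸ hy1)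
          rw [← hc, mul_comm x ((algebraMap F R) c), ← Algebra.smul_def]
          exact Submodule.smul_mem _ c (hxM h1)
        · exact gM_mul_le 𝒜 n (Submodule.mul_mem_mul (hxM h1) (hyM h2))
    · intro hlt
      rcases Nat.eq_zero_or_pos d₁ with h1 | h1
      · subst h1
        obtain ⟨c, hc⟩ := Submodule.mem_one.mp (h0 ▸ hx1)
        rw [← hc, ← Algebra.smul_def]
        refine Submodule.smul_mem _ c ?_
        exact hyMM (by omega)
      · rcases Nat.eq_zero_or_pos d₂ with h2 | h2
        · subst h2
          obtain ⟨c, hc⟩ := Submodule.mem_one.mp (h0 ▸ hy1)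
          rw [← hc, mul_comm x ((algebraMap F R) c), ← Algebra.smul_def]
          exact Submodule.smul_mem _ c (hxMM (by omega))
        · exact Submodule.mul_mem_mul (hxM h1) (hyM h2)

lemma below_mem_span {x : R} (n : ℕ) (hx : x ∈ gBelow 𝒜 n) :
    x ∈ Submodule.span F (Submonoid.closure (⋃ i ∈ Set.Iic n, (𝒜 i : Set R)) : Set R) := by
  have := Algebra.adjoin_eq_span (R := F) (s := ⋃ i ∈ Set.Iic n, (𝒜 i : Set R))
  rw [show Algebra.adjoin F (⋃ i ∈ Set.Iic n, (𝒜 i : Set R)) = gBelow 𝒜 n from rfl] at this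
  exact this ▸ hx

lemma below_decompose (h0 : 𝒜 0 = 1) (n : ℕ) {x : R} (hx : x ∈ gBelow 𝒜 n) (e : ℕ) :
    (decompose 𝒜 x e : R) ∈ gBelow 𝒜 n := by
  have hx' := below_mem_span 𝒜 n hx
  clear hx
  induction hx' using Submodule.span_induction with
  | mem y hy =>
    obtain ⟨d, hyd, hyA, -, -⟩ := monomial_lemma 𝒜 h0 n y hy
    rcases eq_or_ne d e with h | h
    · rw [DirectSum.decompose_of_mem_same 𝒜 (h ▸ hyd)]; exact hyA
    · rw [DirectSum.decompose_of_mem_ne 𝒜 hyd h]; exact zero_mem _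
  | zero => simpa using zero_mem (gBelow 𝒜 n)
  | add y z _ _ ihy ihz =>
    have : (decompose 𝒜 (y + z) e : R) = (decompose 𝒜 y e : R) + (decompose 𝒜 z e : R) := by
      exact map_add (gProj 𝒜 e) y z
    rw [this]; exact add_mem ihy ihz
  | smul c y _ ihy =>
    have : (decompose 𝒜 (c • y) e : R) = c • (decompose 𝒜 y e : R) := by
      exact map_smul (gProj 𝒜 e) c y
    rw [this]; exact Subalgebra.smul_mem _ ihy c

lemma gM_decompose (h0 : 𝒜 0 = 1) (n : ℕ) {x : R} (hx : x ∈ gM 𝒜 n) (e : ℕ) :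
    (decompose 𝒜 x e : R) ∈ gM 𝒜 n :=
  ⟨below_decompose 𝒜 h0 n hx.1 e, pos_decompose 𝒜 hx.2 e⟩

lemma gM_high_deg (h0 : 𝒜 0 = 1) {n e : ℕ} (hn : n < e) :
    gM 𝒜 n ⊓ 𝒜 e ≤ gM 𝒜 n * gM 𝒜 n := by
  rintro x ⟨⟨hxA, -⟩, hxe⟩
  have key : ∀ z, z ∈ Submodule.span F
      (Submonoid.closure (⋃ i ∈ Set.Iic n, (𝒜 i : Set R)) : Set R) →
      (decompose 𝒜 z e : R) ∈ gM 𝒜 n * gM 𝒜 n := by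
    intro z hz
    induction hz using Submodule.span_induction with
    | mem y hy =>
      obtain ⟨d, hyd, -, -, hyMM⟩ := monomial_lemma 𝒜 h0 n y hy
      rcases eq_or_ne d e with h | h
      · rw [DirectSum.decompose_of_mem_same 𝒜 (h ▸ hyd)]; exact hyMM (h ▸ hn)
      · rw [DirectSum.decompose_of_mem_ne 𝒜 hyd h]; exact zero_mem _
    | zero => simpa using zero_mem (gM 𝒜 n * gM 𝒜 n)
    | add y z _ _ ihy ihz =>
      have : (decompose 𝒜 (y + z) e : R) = (decompose 𝒜 y e : R) + (decompose 𝒜 z e : R) := by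
        exact map_add (gProj 𝒜 e) y z
      rw [this]; exact add_mem ihy ihz
    | smul c y _ ihy =>
      have : (decompose 𝒜 (c • y) e : R) = c • (decompose 𝒜 y e : R) := by
        exact map_smul (gProj 𝒜 e) c y
      rw [this]; exact Submodule.smul_mem _ c ihy
  have := key x (below_mem_span 𝒜 n hxA)
  rwa [DirectSum.decompose_of_mem_same 𝒜 hxe] at this

lemma mul_decompose_mem (N₁ N₂ : Submodule F R)
    (h₁ : ∀ x ∈ N₁, ∀ i, (decompose 𝒜 x i : R) ∈ N₁)
    (h₂ : ∀ x ∈ N₂, ∀ i, (decompose 𝒜 x i : R) ∈ N₂)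
    {x : R} (hx : x ∈ N₁ * N₂) (d : ℕ) :
    (decompose 𝒜 x d : R) ∈
      ⨆ (p : ℕ × ℕ) (_ : p.1 + p.2 = d), ((N₁ ⊓ 𝒜 p.1) * (N₂ ⊓ 𝒜 p.2) : Submodule F R) := by
  classical
  refine Submodule.mul_induction_on hx ?_ ?_
  · intro m hm nn hn
    have hmn : m * nn = ∑ e ∈ (decompose 𝒜 m).support, ∑ f ∈ (decompose 𝒜 nn).support,
        (decompose 𝒜 m e : R) * (decompose 𝒜 nn f : R) := by
      rw [← Finset.sum_mul_sum, DirectSum.sum_support_decompose, DirectSum.sum_support_decompose]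
    have : (decompose 𝒜 (m * nn) d : R) = ∑ e ∈ (decompose 𝒜 m).support,
        ∑ f ∈ (decompose 𝒜 nn).support,
          (decompose 𝒜 ((decompose 𝒜 m e : R) * (decompose 𝒜 nn f : R)) d : R) := by
      conv_lhs => rw [hmn]
      rw [show ∀ z : R, (decompose 𝒜 z d : R) = gProj 𝒜 d z from fun _ => rfl]
      rw [map_sum]
      refine Finset.sum_congr rfl fun e _ => ?_
      rw [map_sum]; rfl
    rw [this]
    refine Submodule.sum_mem _ fun e _ => Submodule.sum_mem _ fun f _ => ?_
    have hhom : (decompose 𝒜 m e : R) * (decompose 𝒜 nn f : R) ∈ 𝒜 (e + f) :=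
      SetLike.mul_mem_graded (SetLike.coe_mem _) (SetLike.coe_mem _)
    rcases eq_or_ne (e + f) d with h | h
    · subst h
      rw [DirectSum.decompose_of_mem_same 𝒜 hhom]
      refine Submodule.mem_iSup_of_mem (e, f) (Submodule.mem_iSup_of_mem rfl ?_)
      exact Submodule.mul_mem_mul ⟨h₁ m hm e, SetLike.coe_mem _⟩ ⟨h₂ nn hn f, SetLike.coe_mem _⟩
    · rw [DirectSum.decompose_of_mem_ne 𝒜 hhom h]
      exact zero_mem _
  · intro a b iha ihb
    have : (decompose 𝒜 (a + b) d : R) = (decompose 𝒜 a d : R) + (decompose 𝒜 b d : R) :=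
      map_add (gProj 𝒜 d) a b
    rw [this]; exact add_mem iha ihb

lemma aux_split (σ i e f : ℕ) (hi : 2 ≤ i) (he : 1 ≤ e) (hf : 1 ≤ f)
    (h : (i - 1) * σ < e + f) :
    ∃ i₁ i₂, 1 ≤ i₁ ∧ 1 ≤ i₂ ∧ i₁ + i₂ = i ∧ (i₁ - 1) * σ < e ∧ (i₂ - 1) * σ < f := by
  rcases Nat.eq_zero_or_pos σ with h0 | hσ
  · exact ⟨i - 1, 1, by omega, by omega, by omega, by simp only [h0, Nat.mul_zero]; omega, by simp only [h0, Nat.mul_zero]; omega⟩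
  · obtain ⟨q, r, hr, hqr⟩ : ∃ q r, r < σ ∧ q * σ + r = f - 1 :=
      ⟨(f - 1) / σ, (f - 1) % σ, Nat.mod_lt _ hσ,
        by rw [Nat.mul_comm]; exact Nat.div_add_mod (f - 1) σ⟩
    by_cases hc : i - 1 ≤ q + 1
    · have h1 : (i - 1 - 1) * σ ≤ q * σ := Nat.mul_le_mul_right σ (by omega)
      exact ⟨1, i - 1, le_refl 1, by omega, by omega, by simp only [Nat.sub_self, Nat.zero_mul]; omega, by omega⟩
    · have h2 : (i - (q + 1) - 1) * σ + (q + 1) * σ = (i - 1) * σ := by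
        rw [← Nat.add_mul]; congr 1; omega
      have h3 : (q + 1) * σ = q * σ + σ := by ring
      have h4 : (q + 1 - 1) * σ = q * σ := by congr 1
      exact ⟨i - (q + 1), q + 1, by omega, by omega, by omega, by omega, by omega⟩

lemma gM_count (h0 : 𝒜 0 = 1) (n : ℕ) : ∀ d : ℕ, ∀ i : ℕ, 1 ≤ i → (i - 1) * n < d →
    gM 𝒜 n ⊓ 𝒜 d ≤ gM 𝒜 n ^ i := by
  intro d
  induction d using Nat.strong_induction_on with
  | _ d IH =>
    intro i hi hlt
    rcases eq_or_lt_of_le hi with h1 | hi2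
    · rw [← h1, pow_one]; exact inf_le_left
    · have hnd : n < d := by
        have h5 : 1 * n ≤ (i - 1) * n := Nat.mul_le_mul_right n (by omega)
        rw [one_mul] at h5; omega
      intro x hx
      have hxd : x ∈ 𝒜 d := hx.2
      have hxMM : x ∈ (gM 𝒜 n * gM 𝒜 n : Submodule F R) := gM_high_deg 𝒜 h0 hnd hx
      have hdec := mul_decompose_mem 𝒜 (gM 𝒜 n) (gM 𝒜 n)
        (fun z hz j => gM_decompose 𝒜 h0 n hz j) (fun z hz j => gM_decompose 𝒜 h0 n hz j) hxMM d
      rw [DirectSum.decompose_of_mem_same 𝒜 hxd] at hdec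
      suffices hS : (⨆ (p : ℕ × ℕ) (_ : p.1 + p.2 = d),
          ((gM 𝒜 n ⊓ 𝒜 p.1) * (gM 𝒜 n ⊓ 𝒜 p.2) : Submodule F R)) ≤ gM 𝒜 n ^ i from hS hdec
      refine iSup₂_le fun p hp => ?_
      obtain ⟨e, f⟩ := p
      simp only at hp
      rcases Nat.eq_zero_or_pos e with he | he
      · subst he
        rw [le_bot_iff.mp (gM_inf_zero 𝒜), Submodule.bot_mul]
        exact bot_le
      rcases Nat.eq_zero_or_pos f with hf | hf
      · subst hf
        rw [le_bot_iff.mp (gM_inf_zero 𝒜), Submodule.mul_bot]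
        exact bot_le
      · obtain ⟨i₁, i₂, hi₁, hi₂, hsum, hlt₁, hlt₂⟩ :=
          aux_split n i e f hi2 he hf (hp ▸ hlt)
        calc (gM 𝒜 n ⊓ 𝒜 e) * (gM 𝒜 n ⊓ 𝒜 f) ≤ gM 𝒜 n ^ i₁ * gM 𝒜 n ^ i₂ :=
              mul_le_mul' (IH e (by omega) i₁ hi₁ hlt₁) (IH f (by omega) i₂ hi₂ hlt₂)
          _ = gM 𝒜 n ^ i := by rw [← pow_add, hsum]

lemma pos_inf_zero : gradePos 𝒜 ⊓ 𝒜 0 ≤ ⊥ := by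
  rintro x ⟨hxP, hx0⟩
  have := (mem_pos_iff 𝒜 x).mp hxP
  rw [DirectSum.decompose_of_mem_same 𝒜 hx0] at this
  simpa using this

lemma eta_le (η : ℕ) (hη : gEta 𝒜 = (η : ℕ∞)) {d : ℕ} (hd : 0 < d) (h : η < d) :
    𝒜 d ≤ gM 𝒜 (gSigma 𝒜) * gradePos 𝒜 := by
  by_contra hc
  have hmem : (d : ℕ∞) ≤ gEta 𝒜 := le_sSup ⟨d, ⟨hd, hc⟩, rfl⟩
  rw [hη] at hmem
  exact absurd (by exact_mod_cast hmem) (not_le.mpr h)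

lemma gMain (h0 : 𝒜 0 = 1) (η : ℕ) (hη : gEta 𝒜 = (η : ℕ∞)) :
    ∀ j : ℕ, 1 ≤ j → ∀ d : ℕ, (j - 1) * gSigma 𝒜 + η < d →
      𝒜 d ≤ (gM 𝒜 (gSigma 𝒜)) ^ j * gradePos 𝒜 := by
  intro j
  induction j using Nat.strong_induction_on with
  | _ j IH =>
    intro hj d hd
    set n := gSigma 𝒜 with hn
    have hd0 : 0 < d := by omega
    have hdη : η < d := by omega
    have hMP : 𝒜 d ≤ gM 𝒜 n * gradePos 𝒜 := eta_le 𝒜 η hη hd0 hdη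
    intro x hx
    have hdec := mul_decompose_mem 𝒜 (gM 𝒜 n) (gradePos 𝒜)
      (fun z hz i => gM_decompose 𝒜 h0 n hz i) (fun z hz i => pos_decompose 𝒜 hz i) (hMP hx) d
    rw [DirectSum.decompose_of_mem_same 𝒜 hx] at hdec
    suffices hS : (⨆ (p : ℕ × ℕ) (_ : p.1 + p.2 = d),
        ((gM 𝒜 n ⊓ 𝒜 p.1) * (gradePos 𝒜 ⊓ 𝒜 p.2) : Submodule F R)) ≤
        gM 𝒜 n ^ j * gradePos 𝒜 from hS hdec
    refine iSup₂_le fun p hp => ?_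
    obtain ⟨e, f⟩ := p
    simp only at hp
    rcases Nat.eq_zero_or_pos e with he | he
    · subst he; rw [le_bot_iff.mp (gM_inf_zero 𝒜), Submodule.bot_mul]; exact bot_le
    rcases Nat.eq_zero_or_pos f with hf | hf
    · subst hf
      rw [le_bot_iff.mp (pos_inf_zero 𝒜), Submodule.mul_bot]; exact bot_le
    rcases eq_or_lt_of_le hj with h1 | hj2
    · rw [← h1, pow_one]
      exact mul_le_mul' inf_le_left inf_le_left
    · by_cases hfη : f ≤ η
      · have he' : (j - 1) * n < e := by omega
        exact mul_le_mul' (gM_count 𝒜 h0 n e j hj he') inf_le_left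
      · have hf' : 1 ≤ f - η := by omega
        have hsum : (j - 1) * n < e + (f - η) := by omega
        obtain ⟨j₁, j₂, hj₁, hj₂, hjsum, hlt₁, hlt₂⟩ := aux_split n j e (f - η) hj2 he hf' hsum
        have h1 : gM 𝒜 n ⊓ 𝒜 e ≤ gM 𝒜 n ^ j₁ := gM_count 𝒜 h0 n e j₁ hj₁ hlt₁
        have h2 : 𝒜 f ≤ gM 𝒜 n ^ j₂ * gradePos 𝒜 := IH j₂ (by omega) hj₂ f (by omega)
        calc (gM 𝒜 n ⊓ 𝒜 e) * (gradePos 𝒜 ⊓ 𝒜 f)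
            ≤ gM 𝒜 n ^ j₁ * (gM 𝒜 n ^ j₂ * gradePos 𝒜) :=
              mul_le_mul' h1 (le_trans inf_le_right h2)
          _ = gM 𝒜 n ^ j * gradePos 𝒜 := by rw [← mul_assoc, ← pow_add, hjsum]

lemma gM_pow_le (m : ℕ) : (gM 𝒜 (gSigma 𝒜)) ^ m ≤ gradePos 𝒜 ^ m := by
  induction m with
  | zero => simp
  | succ m ih =>
    rw [pow_succ, pow_succ]
    exact mul_le_mul' ih inf_le_right


end GBetaAux

/-- For a finitely generated commutative graded `F`-algebra `R` with `R_0 = F` and any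
positive integer `k`, `β_k(R) ≤ (k-1)·σ(R) + η(R)`. -/
theorem gBeta_le_gEta {F R : Type*} [Field F] [CommRing R] [Algebra F R]
    (𝒜 : ℕ → Submodule F R) [GradedAlgebra 𝒜] (h0 : 𝒜 0 = 1)
    (hfg : Algebra.FiniteType F R) (k : ℕ) (hk : 1 ≤ k) :
    gBeta 𝒜 k ≤ (((k - 1) * gSigma 𝒜 : ℕ) : ℕ∞) + gEta 𝒜 := by
  refine sSup_le ?_
  rintro x ⟨d, ⟨hd, hne⟩, rfl⟩
  rcases eq_or_ne (gEta 𝒜) ⊤ with hE | hE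
  · rw [hE, add_top]; exact le_top
  · obtain ⟨η, hη⟩ := WithTop.ne_top_iff_exists.mp hE
    have hle : d ≤ (k - 1) * gSigma 𝒜 + η := by
      by_contra hgt
      push_neg at hgt
      have hmain := gMain 𝒜 h0 η hη.symm k hk d hgt
      have hP : (gM 𝒜 (gSigma 𝒜)) ^ k * gradePos 𝒜 ≤ gradePos 𝒜 ^ (k + 1) := by
        rw [pow_succ]
        exact mul_le_mul' (gM_pow_le 𝒜 k) le_rfl
      exact hne (le_trans hmain hP)
    rw [← hη]
    show (d : ℕ∞) ≤ _
    have h2 : ((d : ℕ) : ℕ∞) ≤ (((k - 1) * gSigma 𝒜 + η : ℕ) : ℕ∞) := Nat.cast_le.mpr hle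
    exact h2.trans_eq (Nat.cast_add _ _)
end

section
/- Let K be a subquotient of the finite group G, i.e., K ≅ H/N for some subgroup H of G and normal subgroup N of H. Then σ(G)/|G| ≤ σ(K)/|K|; equivalently, |K| · σ(G) ≤ |G| · σ(K). -/
set_option maxHeartbeats 1000000
set_option synthInstance.maxHeartbeats 400000
set_option linter.unusedSectionVars false


open scoped ENNReal


open MvPolynomial

/-- The (right) action of a group element `g` on the coordinate ring `F[V]` of `V = ι → F`,
determined by `(f^g)(v) = f (g • v)` where `g` acts on `V` through the representation `ρ`. -/
noncomputable def polyAct {F : Type*} [Field F] {G : Type*} [Group G] {ι : Type*}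
    [Fintype ι] [DecidableEq ι] (ρ : Representation F G (ι → F)) (g : G) :
    MvPolynomial ι F →ₐ[F] MvPolynomial ι F :=
  MvPolynomial.aeval (fun i => ∑ j, (ρ g (Pi.single j 1) i) • MvPolynomial.X j)

/-- The ring of polynomial invariants `F[V]^G`. -/
noncomputable def invRing {F : Type*} [Field F] {G : Type*} [Group G] {ι : Type*}
    [Fintype ι] [DecidableEq ι] (ρ : Representation F G (ι → F)) :
    Subalgebra F (MvPolynomial ι F) :=
  ⨅ g : G, AlgHom.equalizer (polyAct ρ g) (AlgHom.id F (MvPolynomial ι F))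

/-- The degree `d` homogeneous component of a graded subalgebra `S` of the polynomial ring,
as a subspace of the polynomial ring. -/
noncomputable def subComp {F : Type*} [Field F] {ι : Type*} (S : Subalgebra F (MvPolynomial ι F)) (d : ℕ) :
    Submodule F (MvPolynomial ι F) :=
  Subalgebra.toSubmodule S ⊓ homogeneousSubmodule ι F d

/-- `S_+`, the span of the homogeneous elements of positive degree of `S`. -/
noncomputable def subPos {F : Type*} [Field F] {ι : Type*} (S : Subalgebra F (MvPolynomial ι F)) :
    Submodule F (MvPolynomial ι F) :=
  ⨆ d ∈ Set.Ioi (0 : ℕ), subComp S d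

/-- `β_k(S)`, the top degree of `S_+ / S_+^{k+1}`, i.e. the supremum (in `ℕ∞`) of the degrees `d`
such that the degree `d` component of `S_+` is not contained in `S_+^{k+1}`. -/
noncomputable def betaAlg {F : Type*} [Field F] {ι : Type*}
    (S : Subalgebra F (MvPolynomial ι F)) (k : ℕ) : ℕ∞ :=
  sSup ((fun d : ℕ => (d : ℕ∞)) '' {d | 0 < d ∧ ¬ subComp S d ≤ subPos S ^ (k + 1)})

/-- `β_k(F[V], S)`, the top degree of `F[V]/S_+^k F[V]`, i.e. the supremum (in `ℕ∞`) of the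
degrees `d` such that the degree `d` component of the polynomial ring is not contained in
`S_+^k ⬝ F[V]`. -/
noncomputable def betaMod {F : Type*} [Field F] {ι : Type*}
    (S : Subalgebra F (MvPolynomial ι F)) (k : ℕ) : ℕ∞ :=
  sSup ((fun d : ℕ => (d : ℕ∞)) ''
    {d | ¬ homogeneousSubmodule ι F d ≤ subPos S ^ k * (⊤ : Submodule F (MvPolynomial ι F))})

/-- `β_k(G)`, the supremum over all finite dimensional `G`-modules `V` of `β_k(F[V]^G)`. -/
noncomputable def betaGrp (F : Type*) [Field F] (G : Type*) [Group G] (k : ℕ) : ℕ∞ :=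
  ⨆ (n : ℕ) (ρ : Representation F G (Fin n → F)), betaAlg (invRing ρ) k

/-- `S` is a finitely generated module over its subalgebra `T`. -/
noncomputable def fgOver {F : Type*} [Field F] {ι : Type*} (S T : Subalgebra F (MvPolynomial ι F)) : Prop :=
  ∃ B : Finset (MvPolynomial ι F), (B : Set (MvPolynomial ι F)) ⊆ S ∧
    Subalgebra.toSubmodule S ≤ Subalgebra.toSubmodule T * Submodule.span F (B : Set (MvPolynomial ι F))

/-- `σ(S)`: the minimal `d` such that `S` is a finitely generated module over the subalgebra
`F[S_{≤ d}]` generated by the homogeneous elements of `S` of degree at most `d`. -/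
noncomputable def sigmaAlg {F : Type*} [Field F] {ι : Type*}
    (S : Subalgebra F (MvPolynomial ι F)) : ℕ :=
  sInf {d : ℕ | fgOver S (Algebra.adjoin F (⋃ i ∈ Set.Iic d, (subComp S i : Set (MvPolynomial ι F))))}

/-- `σ(G)`, the supremum over all finite dimensional `G`-modules `V` of `σ(F[V]^G)`. -/
noncomputable def sigmaGrp (F : Type*) [Field F] (G : Type*) [Group G] : ℕ∞ :=
  ⨆ (n : ℕ) (ρ : Representation F G (Fin n → F)), (sigmaAlg (invRing ρ) : ℕ∞)

/-- An irreducible (simple, nonzero) representation. -/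
def IsIrredRep {F : Type*} [Field F] {G : Type*} [Group G] {V : Type*}
    [AddCommGroup V] [Module F V] (π : Representation F G V) : Prop :=
  Nontrivial V ∧ ∀ W : Submodule F V, (∀ g : G, ∀ x ∈ W, π g x ∈ W) → W = ⊥ ∨ W = ⊤

section Basics
variable {F : Type*} [Field F] {Γ : Type*} [Group Γ] {ι : Type*} [Fintype ι] [DecidableEq ι]
  (τ : Representation F Γ (ι → F))

lemma pi_single_expand {F : Type*} [Field F] {ι : Type*} [Fintype ι] [DecidableEq ι]
    (v : ι → F) : v = ∑ j, v j • (Pi.single j 1 : ι → F) := by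
  funext i
  simp [Finset.sum_apply, Pi.single_apply, mul_ite, Finset.sum_ite_eq]

lemma polyAct_X (g : Γ) (i : ι) :
    polyAct τ g (X i) = ∑ j, (τ g (Pi.single j 1) i) • X j := aeval_X _ i

lemma polyAct_one : polyAct τ 1 = AlgHom.id F (MvPolynomial ι F) := by
  apply MvPolynomial.algHom_ext; intro i
  simp only [polyAct_X, map_one, AlgHom.coe_id, id_eq]
  rw [Finset.sum_eq_single i]
  · simp
  · intro j _ hj
    simp [Module.End.one_apply, Pi.single_apply, hj]
  · simp

lemma polyAct_mul (g h : Γ) :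
    polyAct τ (g * h) = (polyAct τ h).comp (polyAct τ g) := by
  apply MvPolynomial.algHom_ext; intro i
  simp only [AlgHom.coe_comp, Function.comp_apply, polyAct_X, map_sum, map_smul]
  simp only [polyAct_X, Finset.smul_sum, map_mul, Module.End.mul_apply]
  rw [Finset.sum_comm]
  refine Finset.sum_congr rfl fun k _ => ?_
  simp only [smul_smul, ← Finset.sum_smul]
  congr 1
  conv_lhs => rw [pi_single_expand ((τ h) (Pi.single k 1))]
  simp only [map_sum, map_smul, Finset.sum_apply, Pi.smul_apply, smul_eq_mul]
  exact Finset.sum_congr rfl fun j _ => mul_comm _ _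

lemma mem_invRing_iff {p : MvPolynomial ι F} :
    p ∈ invRing τ ↔ ∀ g : Γ, polyAct τ g p = p := by
  simp [invRing, Algebra.mem_iInf, AlgHom.mem_equalizer]

end Basics
section Grading
variable {F : Type*} [Field F] {Γ : Type*} [Group Γ] {ι : Type*} [Fintype ι] [DecidableEq ι]
  (τ : Representation F Γ (ι → F))

lemma polyAct_isHomogeneous (g : Γ) {p : MvPolynomial ι F} {d : ℕ} (hp : p.IsHomogeneous d) :
    (polyAct τ g p).IsHomogeneous d := by
  have hg : ∀ i : ι, ((fun i => ∑ j, (τ g (Pi.single j 1) i) • (X j : MvPolynomial ι F)) i).IsHomogeneous 1 := by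
    intro i
    rw [← mem_homogeneousSubmodule]
    exact Submodule.sum_mem _ fun j _ =>
      Submodule.smul_mem _ _ ((mem_homogeneousSubmodule _ _).2 (isHomogeneous_X F j))
  have := hp.aeval _ hg
  rwa [one_mul] at this

lemma polyAct_homogeneousComponent (g : Γ) (n : ℕ) (p : MvPolynomial ι F) :
    polyAct τ g (homogeneousComponent n p) = homogeneousComponent n (polyAct τ g p) := by
  conv_rhs => rw [← sum_homogeneousComponent p]
  rw [map_sum, map_sum]
  rw [Finset.sum_congr rfl (fun j _ => homogeneousComponent_of_mem
    ((mem_homogeneousSubmodule _ _).2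
      (polyAct_isHomogeneous τ g (homogeneousComponent_isHomogeneous j p))))]
  rw [Finset.sum_ite_eq]
  split_ifs with h
  · rfl
  · rw [homogeneousComponent_eq_zero, map_zero]
    simpa using h

lemma mem_subComp {S : Subalgebra F (MvPolynomial ι F)} {d : ℕ} {p : MvPolynomial ι F} :
    p ∈ subComp S d ↔ p ∈ S ∧ p.IsHomogeneous d := by
  simp [subComp, mem_homogeneousSubmodule]

lemma mem_of_components {T : Subalgebra F (MvPolynomial ι F)} {p : MvPolynomial ι F} (D : ℕ)
    (hD : p.totalDegree ≤ D) (h : ∀ i, i ≤ D → homogeneousComponent i p ∈ T) : p ∈ T := by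
  rw [← sum_homogeneousComponent p]
  exact Subalgebra.sum_mem _ fun i hi => h i (le_trans (Nat.lt_succ_iff.1 (Finset.mem_range.1 hi)) hD)

end Grading
section ModuleLemmas
variable {F : Type*} [Field F] {ι : Type*}

lemma toSubmodule_mul_self_le (T : Subalgebra F (MvPolynomial ι F)) :
    Subalgebra.toSubmodule T * Subalgebra.toSubmodule T ≤ Subalgebra.toSubmodule T :=
  Submodule.mul_le.2 fun _ ha _ hb => T.mul_mem ha hb

lemma spanT_le_mul (T : Subalgebra F (MvPolynomial ι F)) (B : Set (MvPolynomial ι F))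
    {x : MvPolynomial ι F} (hx : x ∈ Submodule.span (↥T) B) :
    x ∈ Subalgebra.toSubmodule T * Submodule.span F B := by
  induction hx using Submodule.span_induction with
  | mem y hy =>
      have h0 := Submodule.mul_mem_mul (M := Subalgebra.toSubmodule T)
        (N := Submodule.span F B) T.one_mem (Submodule.subset_span hy)
      simpa using h0
  | zero => exact Submodule.zero_mem _
  | add y z _ _ hy hz => exact Submodule.add_mem _ hy hz
  | smul t y _ hy =>
      have h1 : (t : MvPolynomial ι F) * y ∈
          Subalgebra.toSubmodule T * (Subalgebra.toSubmodule T * Submodule.span F B) :=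
        Submodule.mul_mem_mul t.2 hy
      rw [← mul_assoc] at h1
      have h2 : Subalgebra.toSubmodule T * Subalgebra.toSubmodule T * Submodule.span F B ≤
          Subalgebra.toSubmodule T * Submodule.span F B :=
        mul_le_mul_left (toSubmodule_mul_self_le T) _
      have h3 : t • y = (t : MvPolynomial ι F) * y := by rw [Algebra.smul_def]; rfl
      rw [h3]
      exact h2 h1

lemma mul_le_spanT (T : Subalgebra F (MvPolynomial ι F)) (B : Set (MvPolynomial ι F))
    {x : MvPolynomial ι F} (hx : x ∈ Subalgebra.toSubmodule T * Submodule.span F B) :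
    x ∈ Submodule.span (↥T) B := by
  refine Submodule.mul_induction_on hx ?_ ?_
  · intro m hm n hn
    have hn' : n ∈ Submodule.span (↥T) B := Submodule.span_le_restrictScalars F ↥T B hn
    have h3 : m * n = (⟨m, hm⟩ : ↥T) • n := by rw [Algebra.smul_def]; rfl
    rw [h3]
    exact Submodule.smul_mem _ _ hn'
  · intro a b ha hb
    exact Submodule.add_mem _ ha hb

lemma fg_of_le_fg {p q : Submodule F (MvPolynomial ι F)} (h : p ≤ q) (hq : q.FG) : p.FG := by
  have : IsNoetherian F ↥q := isNoetherian_of_fg_of_noetherian _ hq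
  have h1 : (Submodule.comap q.subtype p).FG := IsNoetherian.noetherian _
  have h2 : Submodule.map q.subtype (Submodule.comap q.subtype p) = q ⊓ p :=
    Submodule.map_comap_subtype _ _
  have h3 : q ⊓ p = p := inf_eq_right.2 h
  rw [← h3, ← h2]
  exact h1.map _

/-- The subalgebra `S` as a `T`-submodule of the polynomial ring, for `T ≤ S`. -/
noncomputable def subAsModule {S : Subalgebra F (MvPolynomial ι F)} (T : Subalgebra F (MvPolynomial ι F))
    (hTS : T ≤ S) : Submodule ↥T (MvPolynomial ι F) :=
  { toAddSubmonoid := (Subalgebra.toSubmodule S).toAddSubmonoid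
    smul_mem' := fun t x hx => by
      have h3 : t • x = (t : MvPolynomial ι F) * x := by rw [Algebra.smul_def]; rfl
      rw [h3]
      exact S.mul_mem (hTS t.2) hx }

lemma mem_subAsModule {S T : Subalgebra F (MvPolynomial ι F)} (hTS : T ≤ S)
    {x : MvPolynomial ι F} : x ∈ subAsModule T hTS ↔ x ∈ S := Iff.rfl

/-- The key Noetherian argument: if `S ⊆ T·span(X)` for a finite set `X` (not necessarily
contained in `S`), `T` Noetherian and `T ≤ S`, then `S` is a finitely generated `T`-module
with generators inside `S`. -/
lemma fgOver_of_le_mul {S T : Subalgebra F (MvPolynomial ι F)} (hTS : T ≤ S)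
    (hNoeth : IsNoetherianRing ↥T) (X : Set (MvPolynomial ι F)) (hXfin : X.Finite)
    (h : Subalgebra.toSubmodule S ≤ Subalgebra.toSubmodule T * Submodule.span F X) :
    fgOver S T := by
  classical
  let SG' : Submodule ↥T (MvPolynomial ι F) := subAsModule T hTS
  let M : Submodule ↥T (MvPolynomial ι F) := Submodule.span ↥T X
  have hSM : SG' ≤ M := fun x hx => mul_le_spanT T X (h hx)
  have hMfg : M.FG := Submodule.fg_span hXfin
  have : IsNoetherian ↥T ↥M := isNoetherian_of_fg_of_noetherian _ hMfg
  have hfg : SG'.FG := by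
    have h1 : (Submodule.comap M.subtype SG').FG := IsNoetherian.noetherian _
    have h2 : Submodule.map M.subtype (Submodule.comap M.subtype SG') = M ⊓ SG' :=
      Submodule.map_comap_subtype _ _
    have h3 : M ⊓ SG' = SG' := inf_eq_right.2 hSM
    rw [← h3, ← h2]
    exact h1.map _
  obtain ⟨B, hB⟩ := hfg
  refine ⟨B, ?_, ?_⟩
  · intro b hb
    have hb' : (b : MvPolynomial ι F) ∈ SG' := by
      rw [← hB]; exact Submodule.subset_span hb
    exact (mem_subAsModule hTS).1 hb'
  · intro x hx
    have hx' : x ∈ Submodule.span ↥T (B : Set (MvPolynomial ι F)) := by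
      rw [hB]; exact hx
    exact spanT_le_mul T _ hx'

end ModuleLemmas
section FinGen
variable {F : Type*} [Field F] {ι : Type*} [Finite ι]

lemma homogeneousSubmodule_le_restrict (d : ℕ) :
    homogeneousSubmodule ι F d ≤ restrictTotalDegree ι F d := fun p hp =>
  (mem_restrictTotalDegree ι d p).2 (((mem_homogeneousSubmodule d p).1 hp).totalDegree_le)

lemma subComp_fg (S : Subalgebra F (MvPolynomial ι F)) (i : ℕ) : (subComp S i).FG :=
  fg_of_le_fg (le_trans inf_le_right (homogeneousSubmodule_le_restrict i))
    (Module.Finite.iff_fg.1 inferInstance)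

lemma exists_finset_subComp (S : Subalgebra F (MvPolynomial ι F)) (d : ℕ) :
    ∃ E : Finset (MvPolynomial ι F),
      (∀ p ∈ E, ∃ i, i ≤ d ∧ p ∈ subComp S i) ∧
      (∀ i, i ≤ d → (subComp S i : Set (MvPolynomial ι F)) ⊆
        Submodule.span F (E : Set (MvPolynomial ι F))) := by
  classical
  choose E hE using fun i => subComp_fg S i
  refine ⟨(Finset.Iic d).biUnion (fun i => E i), ?_, ?_⟩
  · intro p hp
    obtain ⟨i, hi, hpi⟩ := Finset.mem_biUnion.1 hp
    refine ⟨i, Finset.mem_Iic.1 hi, ?_⟩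
    rw [← hE i]
    exact Submodule.subset_span hpi
  · intro i hi p hp
    have h1 : p ∈ Submodule.span F ((E i : Set (MvPolynomial ι F))) := by
      rw [hE i]; exact hp
    refine Submodule.span_mono ?_ h1
    intro x hx
    exact Finset.mem_coe.2 (Finset.mem_biUnion.2 ⟨i, Finset.mem_Iic.2 hi, hx⟩)

lemma adjoin_Iic_eq_adjoin_finset (S : Subalgebra F (MvPolynomial ι F)) (d : ℕ)
    {E : Finset (MvPolynomial ι F)} (h1 : ∀ p ∈ E, ∃ i, i ≤ d ∧ p ∈ subComp S i)
    (h2 : ∀ i, i ≤ d → (subComp S i : Set (MvPolynomial ι F)) ⊆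
      Submodule.span F (E : Set (MvPolynomial ι F))) :
    Algebra.adjoin F (⋃ i ∈ Set.Iic d, (subComp S i : Set (MvPolynomial ι F))) =
      Algebra.adjoin F (E : Set (MvPolynomial ι F)) := by
  apply le_antisymm
  · apply Algebra.adjoin_le
    intro p hp
    rw [Set.mem_iUnion₂] at hp
    obtain ⟨i, hi, hpi⟩ := hp
    have h3 : p ∈ Submodule.span F (E : Set (MvPolynomial ι F)) := h2 i hi hpi
    have h4 : Submodule.span F (E : Set (MvPolynomial ι F)) ≤
        Subalgebra.toSubmodule (Algebra.adjoin F (E : Set (MvPolynomial ι F))) :=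
      Submodule.span_le.2 Algebra.subset_adjoin
    exact h4 h3
  · apply Algebra.adjoin_le
    intro p hp
    obtain ⟨i, hi, hpi⟩ := h1 p hp
    exact Algebra.subset_adjoin (Set.mem_iUnion₂.2 ⟨i, hi, hpi⟩)

lemma adjoin_Iic_noetherian (S : Subalgebra F (MvPolynomial ι F)) (d : ℕ) :
    IsNoetherianRing
      ↥(Algebra.adjoin F (⋃ i ∈ Set.Iic d, (subComp S i : Set (MvPolynomial ι F)))) := by
  obtain ⟨E, h1, h2⟩ := exists_finset_subComp S d
  rw [adjoin_Iic_eq_adjoin_finset S d h1 h2]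
  have hfg : (Algebra.adjoin F (E : Set (MvPolynomial ι F))).FG := Subalgebra.fg_adjoin_finset E
  have := (Subalgebra.fg_iff_finiteType _).1 hfg
  exact Algebra.FiniteType.isNoetherianRing F _

lemma adjoin_Iic_le (S : Subalgebra F (MvPolynomial ι F)) (d : ℕ) :
    Algebra.adjoin F (⋃ i ∈ Set.Iic d, (subComp S i : Set (MvPolynomial ι F))) ≤ S := by
  apply Algebra.adjoin_le
  intro p hp
  rw [Set.mem_iUnion₂] at hp
  obtain ⟨i, _, hpi⟩ := hp
  exact hpi.1

end FinGen
section Integrality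

lemma coeff_multiset_prod_totalDegree {F : Type*} [Field F] {ι : Type*}
    (s : Multiset (MvPolynomial ι F)) (d : ℕ)
    (hs : ∀ a ∈ s, MvPolynomial.totalDegree a ≤ d) :
    ∀ k, ((s.map (fun a => Polynomial.X - Polynomial.C a)).prod.coeff k).totalDegree
      ≤ Multiset.card s * d := by
  induction s using Multiset.induction with
  | empty =>
      intro k
      simp only [Multiset.map_zero, Multiset.prod_zero, Multiset.card_zero, zero_mul]
      rcases Nat.eq_zero_or_pos k with hk | hk
      · subst hk; simp
      · rw [Polynomial.coeff_one, if_neg (by omega)]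
        simp
  | cons a s ih =>
      intro k
      have ha : a.totalDegree ≤ d := hs a (Multiset.mem_cons_self a s)
      have hs' : ∀ b ∈ s, MvPolynomial.totalDegree b ≤ d := fun b hb =>
        hs b (Multiset.mem_cons_of_mem hb)
      rw [Multiset.map_cons, Multiset.prod_cons, sub_mul]
      set q := (s.map (fun a => Polynomial.X - Polynomial.C a)).prod with hq
      rw [Polynomial.coeff_sub]
      have hb1 : ((Polynomial.X * q).coeff k).totalDegree ≤ Multiset.card s * d := by
        rcases Nat.eq_zero_or_pos k with hk | hk
        · subst hk; simp
        · obtain ⟨k', rfl⟩ := Nat.exists_eq_add_of_lt hk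
          rw [zero_add, Polynomial.coeff_X_mul]
          exact ih hs' k'
      have hb2 : ((Polynomial.C a * q).coeff k).totalDegree ≤ d + Multiset.card s * d := by
        rw [Polynomial.coeff_C_mul]
        exact le_trans (MvPolynomial.totalDegree_mul a (q.coeff k))
          (add_le_add ha (ih hs' k))
      refine le_trans (MvPolynomial.totalDegree_sub _ _) ?_
      rw [Multiset.card_cons, add_mul, one_mul]
      exact sup_le (le_trans hb1 (Nat.le_add_right _ _)) (le_trans hb2 (by omega))

variable {F : Type*} [Field F] {Γ : Type*} [Group Γ] [Finite Γ] {ι : Type*} [Fintype ι]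
  [DecidableEq ι] (τ : Representation F Γ (ι → F))

lemma polyAct_leftInv (g : Γ) (z : MvPolynomial ι F) :
    polyAct τ g⁻¹ (polyAct τ g z) = z := by
  have h3 : (polyAct τ g⁻¹).comp (polyAct τ g) = AlgHom.id F (MvPolynomial ι F) := by
    rw [← polyAct_mul, mul_inv_cancel, polyAct_one]
  calc polyAct τ g⁻¹ (polyAct τ g z) = ((polyAct τ g⁻¹).comp (polyAct τ g)) z := rfl
    _ = z := by rw [h3]; rfl

lemma polyAct_injective (g : Γ) : Function.Injective (polyAct τ g) := by
  intro x y hxy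
  have h1 := congrArg (polyAct τ g⁻¹) hxy
  rwa [polyAct_leftInv, polyAct_leftInv] at h1

/-- The key integrality lemma: a `Λ`-invariant homogeneous polynomial of degree `d` is
integral over any subalgebra containing all homogeneous invariants of degree at most
`[Γ:Λ]·d`, via the monic polynomial `∏_{h ∈ f^Γ} (t - h)`. -/
lemma isIntegral_of_invariant (Λ : Subgroup Γ) (f : MvPolynomial ι F) (d : ℕ)
    (hf : f.IsHomogeneous d) (hinv : ∀ γ, γ ∈ Λ → polyAct τ γ f = f)
    (T : Subalgebra F (MvPolynomial ι F))
    (hT : ∀ i, i ≤ Λ.index * d →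
      (subComp (invRing τ) i : Set (MvPolynomial ι F)) ⊆ T) :
    IsIntegral ↥T f := by
  classical
  have : Fintype Γ := Fintype.ofFinite Γ
  set φf : Γ → MvPolynomial ι F := fun g => polyAct τ g f with hφf
  set Orb : Finset (MvPolynomial ι F) := Finset.image φf Finset.univ with hOrb
  have hfOrb : f ∈ Orb := by
    refine Finset.mem_image.2 ⟨1, Finset.mem_univ 1, ?_⟩
    show polyAct τ 1 f = f
    rw [polyAct_one]; rfl
  have hOrbact : ∀ g : Γ, Finset.image (polyAct τ g) Orb = Orb := by
    intro g
    rw [hOrb, Finset.image_image]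
    have h1 : (polyAct τ g) ∘ φf = φf ∘ (fun a => a * g) := by
      funext a
      show polyAct τ g (polyAct τ a f) = polyAct τ (a * g) f
      rw [polyAct_mul]; rfl
    rw [h1, ← Finset.image_image]
    congr 1
    apply Finset.image_univ_of_surjective
    intro a
    exact ⟨a * g⁻¹, by group⟩
  have hcard : Orb.card ≤ Λ.index := by
    have : Fintype (Quotient (QuotientGroup.rightRel Λ)) := Fintype.ofFinite _
    have hwd : ∀ a b : Γ, (QuotientGroup.rightRel Λ) a b → φf a = φf b := by
      intro a b hab
      rw [QuotientGroup.rightRel_apply] at hab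
      have hb : b = (b * a⁻¹) * a := by group
      show polyAct τ a f = polyAct τ b f
      rw [hb, polyAct_mul]
      show polyAct τ a f = polyAct τ a (polyAct τ (b * a⁻¹) f)
      rw [hinv _ hab]
    have himg : Orb = Finset.image
        (Quotient.lift φf (fun a b h => hwd a b h)) Finset.univ := by
      rw [hOrb]
      apply Finset.ext; intro x
      simp only [Finset.mem_image, Finset.mem_univ, true_and]
      constructor
      · rintro ⟨g, rfl⟩
        exact ⟨Quotient.mk _ g, rfl⟩
      · rintro ⟨q, rfl⟩
        obtain ⟨g, rfl⟩ := Quotient.exists_rep q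
        exact ⟨g, rfl⟩
    rw [himg]
    calc Finset.card _ ≤ Fintype.card (Quotient (QuotientGroup.rightRel Λ)) := by
          refine le_trans Finset.card_image_le ?_
          simp [Finset.card_univ]
      _ = Λ.index := by
          rw [Fintype.card_eq_nat_card,
            Nat.card_congr (QuotientGroup.quotientRightRelEquivQuotientLeftRel Λ),
            Subgroup.index_eq_card]
  set Qp : Polynomial (MvPolynomial ι F) :=
    ∏ a ∈ Orb, (Polynomial.X - Polynomial.C a) with hQp
  have hmonic : Qp.Monic :=
    Polynomial.monic_prod_of_monic _ _ (fun a _ => Polynomial.monic_X_sub_C a)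
  have heval : Polynomial.eval f Qp = 0 := by
    rw [hQp, Polynomial.eval_prod]
    exact Finset.prod_eq_zero hfOrb (by simp)
  have hdeg : ∀ a ∈ Orb, MvPolynomial.totalDegree a ≤ d := by
    intro a ha
    obtain ⟨g, _, rfl⟩ := Finset.mem_image.1 ha
    exact (polyAct_isHomogeneous τ g hf).totalDegree_le
  have hcoeffdeg : ∀ k, (Qp.coeff k).totalDegree ≤ Λ.index * d := by
    intro k
    have h1 : (Qp.coeff k).totalDegree ≤ Orb.card * d := by
      rw [hQp, Finset.prod_eq_multiset_prod]
      have := coeff_multiset_prod_totalDegree Orb.val d (fun a ha => hdeg a ha) k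
      simpa using this
    exact le_trans h1 (Nat.mul_le_mul_right d hcard)
  have hcoeffinv : ∀ k (g : Γ), polyAct τ g (Qp.coeff k) = Qp.coeff k := by
    intro k g
    have hmap : Polynomial.map (polyAct τ g).toRingHom Qp = Qp := by
      rw [hQp, Polynomial.map_prod]
      have h2 : ∀ a ∈ Orb, Polynomial.map (polyAct τ g).toRingHom
          (Polynomial.X - Polynomial.C a)
          = Polynomial.X - Polynomial.C (polyAct τ g a) := by
        intro a _
        rw [Polynomial.map_sub, Polynomial.map_X, Polynomial.map_C]
        rfl
      rw [Finset.prod_congr rfl h2]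
      rw [← Finset.prod_image (g := fun x => polyAct τ g x)
        (f := fun b => Polynomial.X - Polynomial.C b) (s := Orb)
        (fun x _ y _ h => polyAct_injective τ g h)]
      rw [hOrbact g]
    have h3 := congrArg (fun p => Polynomial.coeff p k) hmap
    simp only [Polynomial.coeff_map] at h3
    exact h3
  have hcoeffT : ∀ k, Qp.coeff k ∈ T := by
    intro k
    apply mem_of_components (Λ.index * d) (hcoeffdeg k)
    intro i hi
    apply hT i hi
    rw [SetLike.mem_coe, mem_subComp]
    constructor
    · rw [mem_invRing_iff]
      intro g
      rw [polyAct_homogeneousComponent, hcoeffinv k g]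
    · exact homogeneousComponent_isHomogeneous i _
  let p' : Polynomial ↥T := ∑ k ∈ Finset.range (Qp.natDegree + 1),
    Polynomial.monomial k (⟨Qp.coeff k, hcoeffT k⟩ : ↥T)
  have halg : ∀ t : ↥T, algebraMap ↥T (MvPolynomial ι F) t = ↑t := fun _ => rfl
  have hmap' : p'.map (algebraMap ↥T (MvPolynomial ι F)) = Qp := by
    rw [Polynomial.map_sum]
    have h4 : ∀ k ∈ Finset.range (Qp.natDegree + 1),
        (Polynomial.monomial k (⟨Qp.coeff k, hcoeffT k⟩ : ↥T)).map
          (algebraMap ↥T (MvPolynomial ι F)) = Polynomial.monomial k (Qp.coeff k) := by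
      intro k _
      rw [Polynomial.map_monomial, halg]
    rw [Finset.sum_congr rfl h4, ← Polynomial.as_sum_range]
  have hinj : Function.Injective (algebraMap ↥T (MvPolynomial ι F)) := by
    intro a b h
    exact Subtype.ext (by rw [← halg a, ← halg b, h])
  refine ⟨p', Polynomial.monic_of_injective hinj (by rw [hmap']; exact hmonic), ?_⟩
  rw [Polynomial.eval₂_eq_eval_map, hmap', heval]

end Integrality
section MF
variable {F : Type*} [Field F] {ι : Type*}

lemma adjoinF_le_mul_of_integral (T : Subalgebra F (MvPolynomial ι F))
    (gens : Set (MvPolynomial ι F)) (hfin : gens.Finite)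
    (hint : ∀ x ∈ gens, IsIntegral ↥T x) :
    ∃ M : Set (MvPolynomial ι F), M.Finite ∧
      (Algebra.adjoin F gens : Set (MvPolynomial ι F)) ⊆
        ↑(Subalgebra.toSubmodule T * Submodule.span F M) := by
  obtain ⟨M, hM⟩ := fg_adjoin_of_finite hfin hint
  refine ⟨↑M, M.finite_toSet, ?_⟩
  intro x hx
  have hx2 : x ∈ Algebra.adjoin ↥T gens := by
    have hle : Algebra.adjoin F gens ≤ (Algebra.adjoin ↥T gens).restrictScalars F :=
      Algebra.adjoin_le (fun y hy => Algebra.subset_adjoin hy)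
    exact hle hx
  have hx3 : x ∈ Submodule.span ↥T (M : Set (MvPolynomial ι F)) := by
    rw [hM]; exact hx2
  exact spanT_le_mul T _ hx3

variable [Fintype ι] [DecidableEq ι] {Γ : Type*} [Group Γ] [Finite Γ]
  (τ : Representation F Γ (ι → F))

/-- `F[V]` is module-finite over any subalgebra containing all homogeneous invariants of
degree at most `|Γ|`. -/
lemma top_le_mul_of_invariants (T : Subalgebra F (MvPolynomial ι F))
    (hT : ∀ i, i ≤ Nat.card Γ →
      (subComp (invRing τ) i : Set (MvPolynomial ι F)) ⊆ T) :
    ∃ M : Set (MvPolynomial ι F), M.Finite ∧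
      ∀ x : MvPolynomial ι F, x ∈ Subalgebra.toSubmodule T * Submodule.span F M := by
  have hint : ∀ x ∈ Set.range (X : ι → MvPolynomial ι F), IsIntegral ↥T x := by
    rintro _ ⟨i, rfl⟩
    refine isIntegral_of_invariant τ ⊥ (X i) 1 (isHomogeneous_X F i) ?_ T ?_
    · intro γ hγ
      rw [Subgroup.mem_bot] at hγ
      subst hγ
      rw [polyAct_one]; rfl
    · intro j hj
      apply hT
      rwa [Subgroup.index_bot, mul_one] at hj
  obtain ⟨M, hfin, hM⟩ := adjoinF_le_mul_of_integral T _ (Set.finite_range X) hint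
  refine ⟨M, hfin, fun x => ?_⟩
  apply hM
  rw [SetLike.mem_coe, MvPolynomial.adjoin_range_X]
  trivial

/-- Noether-type bound: the invariant ring is a finitely generated module over the subalgebra
generated by the invariants of degree at most `|Γ|`; in particular the defining set of
`sigmaAlg` is nonempty. -/
lemma fgOver_card (τ : Representation F Γ (ι → F)) :
    fgOver (invRing τ) (Algebra.adjoin F
      (⋃ i ∈ Set.Iic (Nat.card Γ), (subComp (invRing τ) i : Set (MvPolynomial ι F)))) := by
  classical
  set T := Algebra.adjoin F
    (⋃ i ∈ Set.Iic (Nat.card Γ), (subComp (invRing τ) i : Set (MvPolynomial ι F))) with hTdef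
  have hT : ∀ i, i ≤ Nat.card Γ →
      (subComp (invRing τ) i : Set (MvPolynomial ι F)) ⊆ T := by
    intro i hi p hp
    exact Algebra.subset_adjoin (Set.mem_iUnion₂.2 ⟨i, hi, hp⟩)
  obtain ⟨M, hfin, hM⟩ := top_le_mul_of_invariants τ T hT
  exact fgOver_of_le_mul (adjoin_Iic_le _ _) (adjoin_Iic_noetherian _ _) M hfin
    (fun x _ => hM x)

lemma sigmaAlg_set_nonempty (τ : Representation F Γ (ι → F)) :
    {d : ℕ | fgOver (invRing τ) (Algebra.adjoin F
      (⋃ i ∈ Set.Iic d, (subComp (invRing τ) i : Set (MvPolynomial ι F))))}.Nonempty :=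
  ⟨Nat.card Γ, fgOver_card τ⟩

lemma fgOver_sigmaAlg (τ : Representation F Γ (ι → F)) :
    fgOver (invRing τ) (Algebra.adjoin F
      (⋃ i ∈ Set.Iic (sigmaAlg (invRing τ)),
        (subComp (invRing τ) i : Set (MvPolynomial ι F)))) :=
  Nat.sInf_mem (sigmaAlg_set_nonempty τ)

end MF

section DegAeval
variable {F : Type*} [Field F] {ι κ : Type*}

lemma totalDegree_aeval_le (w : κ → MvPolynomial ι F) (c : ℕ)
    (hw : ∀ j, (w j).totalDegree ≤ c) (q : MvPolynomial κ F) :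
    (aeval w q).totalDegree ≤ c * q.totalDegree := by
  rw [aeval_def, eval₂_eq]
  refine le_trans (MvPolynomial.totalDegree_finset_sum _ _) ?_
  rw [Finset.sup_le_iff]
  intro u hu
  refine le_trans (MvPolynomial.totalDegree_mul _ _) ?_
  have h1 : (algebraMap F (MvPolynomial ι F) (coeff u q)).totalDegree = 0 :=
    MvPolynomial.totalDegree_C _
  rw [h1, zero_add]
  refine le_trans (MvPolynomial.totalDegree_finset_prod _ _) ?_
  have h2 : ∀ i ∈ u.support, (w i ^ u i).totalDegree ≤ u i * c := by
    intro i _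
    exact le_trans (MvPolynomial.totalDegree_pow _ _) (Nat.mul_le_mul_left _ (hw i))
  refine le_trans (Finset.sum_le_sum h2) ?_
  rw [← Finset.sum_mul]
  have h3 : ∑ i ∈ u.support, u i ≤ q.totalDegree := by
    have := MvPolynomial.le_totalDegree (p := q) (s := u) hu
    simpa [Finsupp.sum] using this
  calc (∑ i ∈ u.support, u i) * c ≤ q.totalDegree * c := Nat.mul_le_mul_right c h3
    _ = c * q.totalDegree := Nat.mul_comm _ _

end DegAeval
section Key
open scoped Pointwise

variable {F : Type*} [Field F] {G K : Type*} [Group G] [Finite G] [Group K]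

lemma key_lemma {n : ℕ} (ρ : Representation F G (Fin n → F))
    (H : Subgroup G) (N : Subgroup ↥H) [N.Normal] (e : K ≃* ↥H ⧸ N) :
    ∃ (m : ℕ) (π : Representation F K (Fin m → F)),
      sigmaAlg (invRing ρ) ≤ H.index * (Nat.card ↥N * sigmaAlg (invRing π)) := by
  classical
  have hKfin : Finite K := Finite.of_equiv _ e.symm.toEquiv
  -- the subgroup of `G` corresponding to `N`
  set N' : Subgroup G := N.map H.subtype with hN'
  have hNcard : Nat.card ↥N' = Nat.card ↥N :=
    (Nat.card_congr (Subgroup.equivMapOfInjective N H.subtype H.subtype_injective).toEquiv).symm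
  set c : ℕ := Nat.card ↥N' with hc
  set τN : Representation F ↥N' (Fin n → F) := ρ.comp N'.subtype with hτN
  set R := invRing τN with hR
  set SH := invRing (ρ.comp H.subtype) with hSH
  set SG := invRing ρ with hSG
  have hpolyN : ∀ (ν : ↥N'), polyAct τN ν = polyAct ρ ↑ν := fun ν => rfl
  have hpolyH : ∀ (h : ↥H), polyAct (ρ.comp H.subtype) h = polyAct ρ ↑h := fun h => rfl
  -- `R` is stable under the action of `H`
  have hRstab : ∀ (h : G), h ∈ H → ∀ p, p ∈ R → polyAct ρ h p ∈ R := by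
    intro h hh p hp
    rw [hR, mem_invRing_iff] at hp ⊢
    intro ν
    rw [hpolyN]
    have h1 : polyAct ρ (↑ν) (polyAct ρ h p) = polyAct ρ (h * ↑ν) p := by
      rw [polyAct_mul]; rfl
    have hν' : h * ↑ν * h⁻¹ ∈ N' := by
      obtain ⟨ν₀, hν₀, hν₀eq⟩ := ν.2
      have hcoe : h * ↑ν * h⁻¹ = H.subtype ((⟨h, hh⟩ : ↥H) * ν₀ * (⟨h, hh⟩ : ↥H)⁻¹) := by
        rw [← hν₀eq]; rfl
      rw [hcoe]
      exact Subgroup.mem_map_of_mem _ (Subgroup.Normal.conj_mem ‹N.Normal› ν₀ hν₀ _)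
    have h2 : h * ↑ν = (h * ↑ν * h⁻¹) * h := by group
    rw [h1, h2, polyAct_mul]
    show polyAct ρ h (polyAct ρ (h * ↑ν * h⁻¹) p) = polyAct ρ h p
    rw [show polyAct ρ (h * ↑ν * h⁻¹) p = p from by
      have := hp ⟨h * ↑ν * h⁻¹, hν'⟩
      rwa [hpolyN] at this]
  -- the space `U` of `N`-invariants of degree at most `c`
  set Uset : Set (MvPolynomial (Fin n) F) :=
    ⋃ i ∈ Set.Iic c, (subComp R i : Set (MvPolynomial (Fin n) F)) with hUset
  set U : Submodule F (MvPolynomial (Fin n) F) := Submodule.span F Uset with hU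
  have hUle : U ≤ restrictTotalDegree (Fin n) F c := by
    rw [hU]
    apply Submodule.span_le.2
    intro p hp
    rw [hUset, Set.mem_iUnion₂] at hp
    obtain ⟨i, hi, hpi⟩ := hp
    rw [SetLike.mem_coe, mem_restrictTotalDegree]
    exact le_trans ((mem_subComp.1 hpi).2.totalDegree_le) hi
  have hUR : U ≤ Subalgebra.toSubmodule R := by
    rw [hU]
    apply Submodule.span_le.2
    intro p hp
    rw [hUset, Set.mem_iUnion₂] at hp
    obtain ⟨i, _, hpi⟩ := hp
    exact (mem_subComp.1 hpi).1
  have hUfd : Module.Finite F ↥U :=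
    Module.Finite.iff_fg.2 (fg_of_le_fg hUle (Module.Finite.iff_fg.1 inferInstance))
  set m := Module.finrank F ↥U with hm
  set bU : Module.Basis (Fin m) F ↥U := Module.finBasis F ↥U with hbU
  set w : Fin m → MvPolynomial (Fin n) F := fun j => ((bU j : ↥U) : MvPolynomial (Fin n) F)
    with hw
  have hwU : ∀ j, w j ∈ U := fun j => (bU j).2
  have hwdeg : ∀ j, (w j).totalDegree ≤ c := fun j =>
    (mem_restrictTotalDegree _ _ _).1 (hUle (hwU j))
  -- stability of U under H, triviality of N'
  have hUstabH : ∀ (h : G), h ∈ H → ∀ u, u ∈ U → polyAct ρ h u ∈ U := by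
    intro h hh u hu
    rw [hU] at hu
    induction hu using Submodule.span_induction with
    | mem p hp =>
        rw [hUset, Set.mem_iUnion₂] at hp
        obtain ⟨i, hi, hpi⟩ := hp
        rw [SetLike.mem_coe, mem_subComp] at hpi
        apply Submodule.subset_span
        rw [hUset, Set.mem_iUnion₂]
        exact ⟨i, hi, by
          rw [SetLike.mem_coe, mem_subComp]
          exact ⟨hRstab h hh p hpi.1, polyAct_isHomogeneous ρ h hpi.2⟩⟩
    | zero => rw [map_zero]; exact Submodule.zero_mem _
    | add x y _ _ hx hy => rw [map_add]; exact Submodule.add_mem _ hx hy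
    | smul a x _ hx => rw [map_smul]; exact Submodule.smul_mem _ a hx
  have hUtriv : ∀ (ν : ↥N'), ∀ u, u ∈ U → polyAct ρ ↑ν u = u := by
    intro ν u hu
    rw [hU] at hu
    induction hu using Submodule.span_induction with
    | mem p hp =>
        rw [hUset, Set.mem_iUnion₂] at hp
        obtain ⟨i, _, hpi⟩ := hp
        have := ((mem_invRing_iff _).1 (mem_subComp.1 hpi).1) ν
        rwa [hpolyN] at this
    | zero => rw [map_zero]
    | add x y _ _ hx hy => rw [map_add, hx, hy]
    | smul a x _ hx => rw [map_smul, hx]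
  -- the restricted action of H on U
  set A : ↥H → (↥U →ₗ[F] ↥U) := fun h =>
    (polyAct ρ ↑h).toLinearMap.restrict (fun u hu => hUstabH ↑h h.2 u hu) with hA
  have hAapply : ∀ (h : ↥H) (u : ↥U), ((A h u : ↥U) : MvPolynomial (Fin n) F)
      = polyAct ρ ↑h ↑u := fun h u => rfl
  have hAmul : ∀ h₁ h₂ : ↥H, A (h₁ * h₂) = (A h₂) ∘ₗ (A h₁) := by
    intro h₁ h₂
    apply LinearMap.ext; intro u; apply Subtype.ext
    rw [LinearMap.comp_apply, hAapply, hAapply, hAapply]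
    show polyAct ρ (↑h₁ * ↑h₂) ↑u = polyAct ρ ↑h₂ (polyAct ρ ↑h₁ ↑u)
    rw [polyAct_mul]; rfl
  have hAid : ∀ (h : ↥H), h ∈ N → A h = LinearMap.id := by
    intro h hhN
    apply LinearMap.ext; intro u; apply Subtype.ext
    rw [hAapply]
    show polyAct ρ ↑h ↑u = ↑u
    exact hUtriv ⟨↑h, Subgroup.mem_map_of_mem _ hhN⟩ ↑u u.2
  have hAwd : ∀ h₁ h₂ : ↥H, ((h₁ : ↥H ⧸ N) = (h₂ : ↥H ⧸ N)) → A h₁ = A h₂ := by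
    intro h₁ h₂ h12
    have hν : h₁⁻¹ * h₂ ∈ N := (QuotientGroup.eq).1 h12
    have h2eq : h₂ = h₁ * (h₁⁻¹ * h₂) := by group
    rw [h2eq, hAmul, hAid _ hν, LinearMap.id_comp]
  -- lift along `e`
  set L : K → ↥H := fun k => Quotient.out (e k) with hLdef
  have hL : ∀ k, ((L k : ↥H) : ↥H ⧸ N) = e k := fun k => QuotientGroup.out_eq' (e k)
  set Cfun : ↥U ≃ₗ[F] (Fin m → F) := bU.equivFun with hCfun
  set Mk : K → Matrix (Fin m) (Fin m) F := fun k =>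
    (LinearMap.toMatrix bU bU (A (L k))).transpose with hMk
  set πf : K → ((Fin m → F) →ₗ[F] (Fin m → F)) := fun k => Matrix.toLin' (Mk k) with hπf
  have hAone : A (L 1) = LinearMap.id := by
    have h1 : A (L 1) = A 1 := by
      apply hAwd
      rw [hL, map_one, QuotientGroup.mk_one]
    rw [h1]
    apply LinearMap.ext; intro u; apply Subtype.ext
    rw [hAapply]
    show polyAct ρ ((1 : ↥H) : G) ↑u = ↑u
    rw [show ((1 : ↥H) : G) = (1 : G) from rfl, polyAct_one]
    rfl
  have hπfone : πf 1 = LinearMap.id := by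
    show Matrix.toLin' (LinearMap.toMatrix bU bU (A (L 1))).transpose = LinearMap.id
    rw [hAone, LinearMap.toMatrix_id, Matrix.transpose_one]
    exact Matrix.toLin'_one
  have hπfmul : ∀ k₁ k₂ : K, πf (k₁ * k₂) = (πf k₁) * (πf k₂) := by
    intro k₁ k₂
    have h1 : A (L (k₁ * k₂)) = A (L k₁ * L k₂) := by
      apply hAwd
      rw [hL, QuotientGroup.mk_mul, hL, hL, ← map_mul]
    show Matrix.toLin' (Mk (k₁ * k₂)) = Matrix.toLin' (Mk k₁) * Matrix.toLin' (Mk k₂)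
    have h2 : Mk (k₁ * k₂) = Mk k₁ * Mk k₂ := by
      show (LinearMap.toMatrix bU bU (A (L (k₁ * k₂)))).transpose = _
      rw [h1, hAmul, LinearMap.toMatrix_comp bU bU bU, Matrix.transpose_mul]
    rw [h2, Matrix.toLin'_mul]
    rfl
  set π : Representation F K (Fin m → F) :=
    { toFun := πf
      map_one' := by
        show πf 1 = 1
        rw [hπfone]; rfl
      map_mul' := fun a b => by
        show πf (a * b) = πf a * πf b
        exact hπfmul a b } with hπ
  have hπapply : ∀ k, π k = πf k := fun _ => rfl
  have hπentry : ∀ (k : K) (x j : Fin m),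
      (π k) (Pi.single x 1) j = Cfun (A (L k) (bU j)) x := by
    intro k x j
    rw [hπapply, hπf]
    show Matrix.toLin' (Mk k) (Pi.single x 1) j = _
    rw [Matrix.toLin'_apply]
    have h1 : (Mk k).mulVec (Pi.single x 1) j = Mk k j x := by
      simp [Matrix.mulVec_single]
    rw [h1]
    show (LinearMap.toMatrix bU bU (A (L k))).transpose j x = _
    rw [Matrix.transpose_apply, LinearMap.toMatrix_apply]
    rfl
  -- the evaluation homomorphism Φ and its equivariance
  have hcoesum : ∀ v : ↥U, ∑ i, (Cfun v) i • w i = (v : MvPolynomial (Fin n) F) := by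
    intro v
    have h3 : ((Cfun.symm (Cfun v) : ↥U) : MvPolynomial (Fin n) F)
        = (v : MvPolynomial (Fin n) F) := by rw [Cfun.symm_apply_apply]
    rw [← h3, hCfun, Module.Basis.equivFun_symm_apply]
    rw [AddSubmonoidClass.coe_finset_sum]
    refine Finset.sum_congr rfl fun i _ => ?_
    rw [SetLike.val_smul]
  have hequiv : ∀ (k : K) (q : MvPolynomial (Fin m) F),
      polyAct ρ ↑(L k) (aeval w q) = aeval w (polyAct π k q) := by
    intro k q
    have halg : (polyAct ρ ↑(L k)).comp (aeval w) = (aeval w).comp (polyAct π k) := by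
      apply MvPolynomial.algHom_ext
      intro j
      rw [AlgHom.comp_apply, AlgHom.comp_apply, aeval_X, polyAct_X, map_sum]
      simp only [map_smul, aeval_X]
      have h5 : ∀ x, (π k) (Pi.single x 1) j • w x = Cfun (A (L k) (bU j)) x • w x := by
        intro x
        rw [hπentry]
      rw [Finset.sum_congr rfl (fun x _ => h5 x), hcoesum (A (L k) (bU j)), hAapply]
    exact congrArg (fun ψ : MvPolynomial (Fin m) F →ₐ[F] MvPolynomial (Fin n) F => ψ q) halg
  -- Φ maps into R
  have hΦR : ∀ q : MvPolynomial (Fin m) F, aeval w q ∈ R := by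
    intro q
    have h1 : aeval w q ∈ (aeval w : MvPolynomial (Fin m) F →ₐ[F] MvPolynomial (Fin n) F).range :=
      ⟨q, rfl⟩
    have h2 : (aeval w : MvPolynomial (Fin m) F →ₐ[F] MvPolynomial (Fin n) F).range ≤ R := by
      rw [← Algebra.adjoin_range_eq_range_aeval]
      apply Algebra.adjoin_le
      rintro x ⟨j, rfl⟩
      exact hUR (hwU j)
    exact h2 h1
  -- invariants of π map to H-invariants
  have hΦinvH : ∀ q, q ∈ invRing π → ∀ (h : G), h ∈ H →
      polyAct ρ h (aeval w q) = aeval w q := by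
    intro q hq h hh
    set h₀ : ↥H := (⟨h, hh⟩ : ↥H) with hh₀
    set k : K := e.symm ((h₀ : ↥H ⧸ N)) with hk
    have hkL : ((L k : ↥H) : ↥H ⧸ N) = (h₀ : ↥H ⧸ N) := by
      rw [hL, hk]
      exact e.apply_symm_apply _
    have hν : h₀⁻¹ * (L k) ∈ N := (QuotientGroup.eq).1 hkL.symm
    have hLk : (L k) = h₀ * (h₀⁻¹ * L k) := by group
    have hstep1 : polyAct ρ ↑(L k) (aeval w q) = polyAct ρ h (aeval w q) := by
      rw [hLk]
      have hcoe : ((h₀ * (h₀⁻¹ * L k) : ↥H) : G) = h * ↑(h₀⁻¹ * L k) := rfl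
      rw [hcoe, polyAct_mul]
      show polyAct ρ ↑(h₀⁻¹ * L k) (polyAct ρ h (aeval w q)) = polyAct ρ h (aeval w q)
      have hmem : polyAct ρ h (aeval w q) ∈ R := hRstab h hh _ (hΦR q)
      have h6 := ((mem_invRing_iff τN).1 hmem) ⟨↑(h₀⁻¹ * L k),
        Subgroup.mem_map_of_mem _ hν⟩
      rwa [hpolyN] at h6
    have hstep2 : polyAct ρ ↑(L k) (aeval w q) = aeval w q := by
      rw [hequiv k q, (mem_invRing_iff π).1 hq k]
    rw [← hstep1, hstep2]
  -- the chain of submodule estimates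
  haveI : Finite K := hKfin
  set s0 := sigmaAlg (invRing π) with hs0def
  obtain ⟨Bπ, hBπS, hBπ⟩ := fgOver_sigmaAlg π
  set Aπ := Algebra.adjoin F (⋃ i ∈ Set.Iic s0,
    (subComp (invRing π) i : Set (MvPolynomial (Fin m) F))) with hAπ
  obtain ⟨M₁, hM₁fin, hM₁⟩ := top_le_mul_of_invariants π (invRing π)
    (fun i _ p hp => (mem_subComp.1 hp).1)
  have hWchain : ∀ x : MvPolynomial (Fin m) F,
      x ∈ Subalgebra.toSubmodule Aπ *
        Submodule.span F ((Bπ : Set (MvPolynomial (Fin m) F)) * M₁) := by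
    intro x
    have h1 := hM₁ x
    have h2 : Subalgebra.toSubmodule (invRing π) * Submodule.span F M₁ ≤
        (Subalgebra.toSubmodule Aπ * Submodule.span F (Bπ : Set (MvPolynomial (Fin m) F))) *
          Submodule.span F M₁ :=
      mul_le_mul_left hBπ _
    have h3 := h2 h1
    rwa [mul_assoc, Submodule.span_mul_span] at h3
  set Φ : MvPolynomial (Fin m) F →ₐ[F] MvPolynomial (Fin n) F := aeval w with hΦ
  set D₁ : Set (MvPolynomial (Fin n) F) :=
    Φ '' ((Bπ : Set (MvPolynomial (Fin m) F)) * M₁) with hD₁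
  have hCrange : ∀ x, x ∈ Φ.range →
      x ∈ Subalgebra.toSubmodule (Aπ.map Φ) * Submodule.span F D₁ := by
    rintro x ⟨q, rfl⟩
    have h1 : Φ q ∈ Submodule.map Φ.toLinearMap
        (Subalgebra.toSubmodule Aπ *
          Submodule.span F ((Bπ : Set (MvPolynomial (Fin m) F)) * M₁)) :=
      ⟨q, hWchain q, rfl⟩
    rw [Submodule.map_mul, ← Subalgebra.map_toSubmodule, ← Submodule.span_image] at h1
    exact h1
  set C' := Algebra.adjoin F (⋃ i ∈ Set.Iic (Nat.card ↥N'),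
    (subComp R i : Set (MvPolynomial (Fin n) F))) with hC'
  obtain ⟨M₀, hM₀fin, hM₀⟩ := top_le_mul_of_invariants τN C' (fun i hi p hp =>
    Algebra.subset_adjoin (Set.mem_iUnion₂.2 ⟨i, hi, hp⟩))
  have hwrange : ∀ j, w j ∈ Φ.range := by
    intro j
    exact ⟨X j, aeval_X w j⟩
  have hUrange : ∀ v : ↥U, (v : MvPolynomial (Fin n) F) ∈ Φ.range := by
    intro v
    rw [← hcoesum v]
    refine Subalgebra.sum_mem _ fun i _ => ?_
    exact Subalgebra.smul_mem _ (hwrange i) _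
  have hC'range : C' ≤ Φ.range := by
    apply Algebra.adjoin_le
    intro p hp
    have hpU : p ∈ U := by
      apply Submodule.subset_span
      rw [hUset]
      exact hp
    exact hUrange ⟨p, hpU⟩
  have hallV : ∀ x : MvPolynomial (Fin n) F,
      x ∈ Subalgebra.toSubmodule Φ.range * Submodule.span F M₀ := by
    intro x
    have h1 := hM₀ x
    have h2 : Subalgebra.toSubmodule C' ≤ Subalgebra.toSubmodule Φ.range := hC'range
    exact mul_le_mul_left h2 _ h1
  set dH := c * s0 with hdH
  obtain ⟨EH, hEH1, hEH2⟩ := exists_finset_subComp SH dH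
  set TG := Algebra.adjoin F (⋃ i ∈ Set.Iic (H.index * dH),
    (subComp SG i : Set (MvPolynomial (Fin n) F))) with hTG
  have hTGsub : ∀ i, i ≤ H.index * dH →
      (subComp SG i : Set (MvPolynomial (Fin n) F)) ⊆ TG := fun i hi p hp =>
    Algebra.subset_adjoin (Set.mem_iUnion₂.2 ⟨i, hi, hp⟩)
  have hEHint : ∀ p ∈ (EH : Set (MvPolynomial (Fin n) F)), IsIntegral ↥TG p := by
    intro p hp
    obtain ⟨i, hile, hpi⟩ := hEH1 p hp
    rw [mem_subComp] at hpi
    refine isIntegral_of_invariant ρ H p i hpi.2 ?_ TG ?_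
    · intro γ hγ
      have h6 := ((mem_invRing_iff _).1 hpi.1) (⟨γ, hγ⟩ : ↥H)
      rwa [hpolyH] at h6
    · intro i' hi'
      exact hTGsub i' (le_trans hi' (Nat.mul_le_mul_left _ hile))
  obtain ⟨ME, hMEfin, hME⟩ := adjoinF_le_mul_of_integral TG ↑EH EH.finite_toSet hEHint
  have hTHle : ∀ x, x ∈ Algebra.adjoin F (⋃ i ∈ Set.Iic dH,
      (subComp SH i : Set (MvPolynomial (Fin n) F))) →
      x ∈ Subalgebra.toSubmodule TG * Submodule.span F ME := by
    intro x hx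
    apply hME
    rw [adjoin_Iic_eq_adjoin_finset SH dH hEH1 hEH2] at hx
    exact hx
  have hmapAπ : ∀ x, x ∈ Aπ.map Φ →
      x ∈ Algebra.adjoin F (⋃ i ∈ Set.Iic dH,
        (subComp SH i : Set (MvPolynomial (Fin n) F))) := by
    intro x hx
    rw [hAπ, AlgHom.map_adjoin] at hx
    refine Algebra.adjoin_le ?_ hx
    rintro y ⟨g, hg, rfl⟩
    rw [Set.mem_iUnion₂] at hg
    obtain ⟨i, his0, hgi⟩ := hg
    rw [SetLike.mem_coe, mem_subComp] at hgi
    apply mem_of_components dH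
    · refine le_trans (totalDegree_aeval_le w c hwdeg g) ?_
      calc c * g.totalDegree ≤ c * i := Nat.mul_le_mul_left c hgi.2.totalDegree_le
        _ ≤ c * s0 := Nat.mul_le_mul_left c his0
    · intro l hl
      apply Algebra.subset_adjoin
      rw [Set.mem_iUnion₂]
      refine ⟨l, hl, ?_⟩
      rw [SetLike.mem_coe, mem_subComp]
      constructor
      · rw [hSH, mem_invRing_iff]
        intro h
        rw [hpolyH, polyAct_homogeneousComponent]
        rw [hΦinvH g hgi.1 ↑h h.2]
      · exact homogeneousComponent_isHomogeneous l _
  set Dfin : Set (MvPolynomial (Fin n) F) := ME * (D₁ * M₀) with hDfin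
  have hDfinite : Dfin.Finite :=
    hMEfin.mul ((Set.Finite.image _ (Bπ.finite_toSet.mul hM₁fin)).mul hM₀fin)
  have hfinal : Subalgebra.toSubmodule SG ≤
      Subalgebra.toSubmodule TG * Submodule.span F Dfin := by
    intro x _
    have h1 : x ∈ Subalgebra.toSubmodule Φ.range * Submodule.span F M₀ := hallV x
    have h4 : Subalgebra.toSubmodule (Aπ.map Φ) ≤
        Subalgebra.toSubmodule TG * Submodule.span F ME := by
      intro z hz
      exact hTHle z (hmapAπ z hz)
    have h2 : Subalgebra.toSubmodule Φ.range ≤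
        (Subalgebra.toSubmodule TG * Submodule.span F ME) * Submodule.span F D₁ := by
      intro y hy
      exact mul_le_mul_left h4 _ (hCrange y hy)
    have h5 := mul_le_mul_left h2 _ h1
    rw [mul_assoc, mul_assoc, Submodule.span_mul_span, Submodule.span_mul_span] at h5
    exact h5
  have hfg : fgOver SG TG :=
    fgOver_of_le_mul (adjoin_Iic_le SG _) (adjoin_Iic_noetherian SG _) Dfin hDfinite hfinal
  refine ⟨m, π, ?_⟩
  have hle : sigmaAlg (invRing ρ) ≤ H.index * dH := Nat.sInf_le hfg
  calc sigmaAlg (invRing ρ) ≤ H.index * dH := hle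
    _ = H.index * (Nat.card ↥N * s0) := by rw [hdH, hNcard]

end Key
/-- For a subquotient `K` of the finite group `G`, `σ(G)/|G| ≤ σ(K)/|K|`, i.e.
`|K| ⬝ σ(G) ≤ |G| ⬝ σ(K)`. -/
theorem sigmaGrp_subquotient {F : Type*} [Field F] {G K : Type*} [Group G] [Finite G]
    [Group K] (hG : (Nat.card G : F) ≠ 0) (H : Subgroup G) (N : Subgroup H) [N.Normal]
    (e : K ≃* H ⧸ N) :
    (Nat.card K : ℕ∞) * sigmaGrp F G ≤ (Nat.card G : ℕ∞) * sigmaGrp F K := by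
  classical
  haveI hKfin : Finite K := Finite.of_equiv _ e.symm.toEquiv
  have hcard : Nat.card G = H.index * (Nat.card ↥N * Nat.card K) := by
    have h1 : H.index * Nat.card ↥H = Nat.card G := Subgroup.index_mul_card H
    have h2 : Nat.card ↥H = Nat.card (↥H ⧸ N) * Nat.card ↥N :=
      Subgroup.card_eq_card_quotient_mul_card_subgroup N
    have h3 : Nat.card K = Nat.card (↥H ⧸ N) := Nat.card_congr e.toEquiv
    rw [← h1, h2, h3]
    ring
  rcases eq_or_ne (sigmaGrp F K) ⊤ with htop | hne
  · rw [htop]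
    have hGpos : (Nat.card G : ℕ∞) ≠ 0 := by
      have := Nat.card_pos (α := G)
      exact_mod_cast Nat.pos_iff_ne_zero.1 this
    rw [ENat.mul_top hGpos]
    exact le_top
  · obtain ⟨sbar, hsbar⟩ : ∃ s : ℕ, sigmaGrp F K = (s : ℕ∞) := by
      obtain ⟨s, hs⟩ := WithTop.ne_top_iff_exists.1 hne
      exact ⟨s, hs.symm⟩
    have hbound : ∀ (k : ℕ) (ρ : Representation F G (Fin k → F)),
        (sigmaAlg (invRing ρ) : ℕ∞) ≤ ((H.index * (Nat.card ↥N * sbar) : ℕ) : ℕ∞) := by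
      intro k ρ
      obtain ⟨m, π, hπ⟩ := key_lemma ρ H N e
      have h1 : (sigmaAlg (invRing π) : ℕ∞) ≤ sigmaGrp F K := by
        refine le_trans ?_ (le_iSup (fun n => ⨆ ρ' : Representation F K (Fin n → F),
          (sigmaAlg (invRing ρ') : ℕ∞)) m)
        exact le_iSup (fun ρ' : Representation F K (Fin m → F) =>
          (sigmaAlg (invRing ρ') : ℕ∞)) π
      rw [hsbar] at h1
      have h2 : sigmaAlg (invRing π) ≤ sbar := by exact_mod_cast h1
      have h3 : sigmaAlg (invRing ρ) ≤ H.index * (Nat.card ↥N * sbar) :=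
        le_trans hπ (Nat.mul_le_mul_left _ (Nat.mul_le_mul_left _ h2))
      exact_mod_cast h3
    have hsup : sigmaGrp F G ≤ ((H.index * (Nat.card ↥N * sbar) : ℕ) : ℕ∞) :=
      iSup_le fun k => iSup_le fun ρ => hbound k ρ
    calc (Nat.card K : ℕ∞) * sigmaGrp F G
        ≤ (Nat.card K : ℕ∞) * ((H.index * (Nat.card ↥N * sbar) : ℕ) : ℕ∞) :=
          mul_le_mul_right hsup _
      _ = ((Nat.card K * (H.index * (Nat.card ↥N * sbar)) : ℕ) : ℕ∞) := by
          push_cast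
          ring
      _ = ((Nat.card G * sbar : ℕ) : ℕ∞) := by
          refine congrArg _ ?_
          rw [hcard]
          ring
      _ = (Nat.card G : ℕ∞) * sigmaGrp F K := by
          rw [hsbar]
          push_cast
          ring
end
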